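/- Let n be a positive integer and let Λ be an additive submonoid of ℚⁿ. If the set ℝ_{≥0}Λ (the set of all finite sums ∑ rᵢλᵢ with rᵢ ∈ ℝ_{≥0} and λᵢ ∈ Λ, viewed as a subset of ℝⁿ) is a group under addition (i.e., is closed under negation), then Λ itself is a group (i.e., is closed under negation). -/

import Mathlib

universe u

/-- A commutative ring `D` is *Egyptian* if every nonzero `d : D` is a sum of reciprocals
`d = 1/d₁ + ⋯ + 1/dₙ` of finitely many pairwise distinct nonzero elements `dᵢ` of `D`, the
equality holding in any field in which `D` embeds.  (For an integral domain `D` this is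
equivalent to the usual definition, in which the equality is required in the fraction field
of `D`: such an equality holds in one field containing `D` iff it holds in all of them.) -/
def IsEgyptian (D : Type u) [CommRing D] : Prop :=
  ∀ d : D, d ≠ 0 → ∃ s : Finset D, (∀ i ∈ s, i ≠ 0) ∧
    ∀ (K : Type u) [Field K] (φ : D →+* K), Function.Injective φ →
      φ d = ∑ i ∈ s, (φ i)⁻¹

/-- A domain `D` is *generically Egyptian* if `D[1/f]` is Egyptian for some nonzero `f : D`. -/
def IsGenericallyEgyptian (D : Type u) [CommRing D] : Prop :=
  ∃ f : D, f ≠ 0 ∧ IsEgyptian (Localization.Away f)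

/-- A domain `D` is *locally Egyptian* if there is a finite set of generators of the unit
ideal of `D` such that inverting any one of them yields an Egyptian ring. -/
def IsLocallyEgyptian (D : Type u) [CommRing D] : Prop :=
  ∃ s : Finset D, Ideal.span (s : Set D) = ⊤ ∧
    ∀ f ∈ s, IsEgyptian (Localization.Away f)

/-- The cone `ℝ_{≥0}Λ ⊆ ℝⁿ`: the set of all finite nonnegative real linear combinations of
elements of `Λ ⊆ ℚⁿ`, viewed inside `ℝⁿ`. -/
def nonnegRealCone {n : ℕ} (Λ : AddSubmonoid (Fin n → ℚ)) : Set (Fin n → ℝ) :=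
  { x | ∃ (t : ℕ) (r : Fin t → ℝ) (y : Fin t → Fin n → ℚ),
      (∀ i, 0 ≤ r i) ∧ (∀ i, y i ∈ Λ) ∧ x = ∑ i, fun j => r i * (y i j : ℝ) }


/-- Coordinatewise cast of a sum of rational scalar multiples. -/
private lemma cast_vec_sum {n : ℕ} {ι : Type} [Fintype ι] (c : ι → ℚ) (v : ι → Fin n → ℚ)
    (u : Fin n → ℚ) (h : ∑ i, c i • v i = u) :
    ∑ i, ((c i : ℝ)) • (fun j => (v i j : ℝ) : Fin n → ℝ) = (fun j => (u j : ℝ)) := by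
  funext j
  have h' := congrFun h j
  rw [Finset.sum_apply] at h'
  simp only [Pi.smul_apply, smul_eq_mul] at h'
  rw [Finset.sum_apply]
  simp only [Pi.smul_apply, smul_eq_mul]
  exact_mod_cast h'

/-- A ℚ-linearly independent family of rational vectors is ℝ-linearly independent after
coordinatewise cast. -/
private lemma cast_indep {n : ℕ} {ι : Type} [Fintype ι] [DecidableEq ι] {y : ι → Fin n → ℚ}
    (hy : LinearIndependent ℚ y) :
    LinearIndependent ℝ (fun i => (fun j => (y i j : ℝ) : Fin n → ℝ)) := by
  classical
  set f : (ι → ℚ) →ₗ[ℚ] (Fin n → ℚ) := Fintype.linearCombination ℚ y with hf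
  have hker : LinearMap.ker f = ⊥ := by
    rw [LinearMap.ker_eq_bot']
    intro c hc
    rw [Fintype.linearIndependent_iff] at hy
    ext i
    exact hy c (by simpa [hf, Fintype.linearCombination_apply] using hc) i
  obtain ⟨g, hg⟩ := f.exists_leftInverse_of_injective hker
  have hgy : ∀ i, g (y i) = Pi.single i 1 := by
    intro i
    have h1 : f (Pi.single i (1:ℚ)) = y i := by
      rw [hf]
      simpa using Fintype.linearCombination_apply_single (R := ℚ) y i (1:ℚ)
    have h2 := LinearMap.congr_fun hg (Pi.single i (1:ℚ))
    simpa [h1] using h2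
  have hgrep : ∀ v : Fin n → ℚ, g v = ∑ j, v j • g (Pi.single j (1:ℚ)) := by
    intro v
    have hv : v = ∑ j, v j • (Pi.single j (1:ℚ) : Fin n → ℚ) := by
      ext m
      rw [Finset.sum_apply]
      simp [Pi.single_apply]
    conv_lhs => rw [hv]
    rw [map_sum]
    simp_rw [map_smul]
  rw [Fintype.linearIndependent_iff]
  intro r hr k
  have hco : ∀ j, ∑ i, r i * (y i j : ℝ) = 0 := by
    intro j
    have h3 := congrFun hr j
    rw [Finset.sum_apply] at h3
    simpa using h3
  have key : ∀ i : ι, ((g (y i)) k : ℝ) = ∑ j, (y i j : ℝ) * ((g (Pi.single j 1)) k : ℝ) := by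
    intro i
    rw [hgrep (y i)]
    rw [Finset.sum_apply]
    push_cast
    simp [smul_eq_mul]
  have h4 : ∑ i, r i * ((g (y i)) k : ℝ) = r k := by
    simp [hgy, Pi.single_apply, apply_ite, mul_ite, mul_one, mul_zero]
  have h5 : ∑ i, r i * ((g (y i)) k : ℝ) = 0 := by
    calc ∑ i, r i * ((g (y i)) k : ℝ)
        = ∑ i, r i * ∑ j, (y i j : ℝ) * ((g (Pi.single j 1)) k : ℝ) := by simp_rw [key]
      _ = ∑ j, (∑ i, r i * (y i j : ℝ)) * ((g (Pi.single j 1)) k : ℝ) := by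
          simp_rw [Finset.mul_sum, Finset.sum_mul]
          rw [Finset.sum_comm]
          simp_rw [mul_assoc]
      _ = 0 := by simp [hco]
  rw [h4] at h5
  exact h5

private lemma ratify {n t : ℕ} (y : Fin t → Fin n → ℚ) :
    ∀ s : Finset (Fin t), ∀ b : Fin n → ℚ, ∀ r : Fin t → ℝ, (∀ i, 0 ≤ r i) →
      (∀ j, (b j : ℝ) = ∑ i ∈ s, r i * (y i j : ℝ)) →
      ∃ q : Fin t → ℚ, (∀ i, 0 ≤ q i) ∧ (∀ i, i ∉ s → q i = 0) ∧
        ∀ j, b j = ∑ i ∈ s, q i * y i j := by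
  classical
  intro s
  induction s using Finset.strongInduction with
  | _ s ih =>
  intro b r hr hb
  by_cases hind :
      LinearIndependent ℝ (fun i : {x // x ∈ s} => (fun j => (y i.1 j : ℝ) : Fin n → ℝ))
  · -- independent case
    have hbv : (fun j => (b j : ℝ) : Fin n → ℝ)
        = ∑ i : {x // x ∈ s}, r i.1 • (fun j => (y i.1 j : ℝ) : Fin n → ℝ) := by
      rw [Finset.sum_coe_sort s (fun i => r i • (fun j => (y i j : ℝ) : Fin n → ℝ))]
      funext j
      rw [Finset.sum_apply]
      simpa using hb j
    set w : Option {x // x ∈ s} → Fin n → ℚ := fun o => o.elim b (fun i => y i.1) with hw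
    have hwnot : ¬ LinearIndependent ℚ w := by
      intro hwli
      have hwR := cast_indep hwli
      rw [Fintype.linearIndependent_iff] at hwR
      have h0 : ∑ o : Option {x // x ∈ s},
          (o.elim (1:ℝ) (fun i => -(r i.1))) • (fun j => (w o j : ℝ) : Fin n → ℝ) = 0 := by
        rw [Fintype.sum_option]
        simp only [Option.elim, one_smul, neg_smul, hw]
        rw [Finset.sum_neg_distrib, ← hbv]
        simp
      have := hwR _ h0 none
      simp at this
    rw [Fintype.not_linearIndependent_iff] at hwnot
    obtain ⟨C, hC0, k, hk⟩ := hwnot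
    have hsum0 : C none • b + ∑ i : {x // x ∈ s}, C (some i) • y i.1 = 0 := by
      rw [Fintype.sum_option] at hC0
      simpa [hw] using hC0
    have hCn : C none ≠ 0 := by
      intro hCn0
      have hrel : ∑ i : {x // x ∈ s}, C (some i) • y i.1 = (0 : Fin n → ℚ) := by
        simpa [hCn0] using hsum0
      have hcast := cast_vec_sum (fun i => C (some i)) _ _ hrel
      rw [Fintype.linearIndependent_iff] at hind
      have hall : ∀ i : {x // x ∈ s}, ((C (some i) : ℚ) : ℝ) = 0 := by
        intro i
        refine hind (fun i => ((C (some i) : ℚ) : ℝ)) ?_ i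
        rw [hcast]
        funext j
        simp
      cases k with
      | none => exact hk hCn0
      | some i => exact hk (by exact_mod_cast hall i)
    set qs : {x // x ∈ s} → ℚ := fun i => -(C (some i)) / C none with hqs
    have hbrep : ∑ i : {x // x ∈ s}, qs i • y i.1 = b := by
      have h2 : ∑ i : {x // x ∈ s}, C (some i) • y i.1 = -(C none • b) :=
        eq_neg_of_add_eq_zero_right hsum0
      calc ∑ i : {x // x ∈ s}, qs i • y i.1
          = (-(C none)⁻¹) • ∑ i : {x // x ∈ s}, C (some i) • y i.1 := by
            rw [Finset.smul_sum]
            refine Finset.sum_congr rfl fun i _ => ?_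
            rw [smul_smul, hqs]
            congr 1
            field_simp
        _ = b := by
            rw [h2, neg_smul, smul_neg, neg_neg, smul_smul, inv_mul_cancel₀ hCn, one_smul]
    have huniq : ∀ i : {x // x ∈ s}, ((qs i : ℚ) : ℝ) = r i.1 := by
      have hcast := cast_vec_sum qs _ _ hbrep
      have hdiff : ∑ i : {x // x ∈ s},
          (((qs i : ℚ) : ℝ) - r i.1) • (fun j => (y i.1 j : ℝ) : Fin n → ℝ) = 0 := by
        simp_rw [sub_smul]
        rw [Finset.sum_sub_distrib, hcast, ← hbv]
        simp
      rw [Fintype.linearIndependent_iff] at hind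
      intro i
      have := hind _ hdiff i
      linarith [this]
    refine ⟨fun i => if h : i ∈ s then qs ⟨i, h⟩ else 0, ?_, ?_, ?_⟩
    · intro i
      by_cases h : i ∈ s
      · simp only [dif_pos h]
        have := huniq ⟨i, h⟩
        have hri := hr i
        rw [← Rat.cast_nonneg (K := ℝ)]
        rw [this]
        exact hri
      · simp [dif_neg h]
    · intro i hi
      simp only [dif_neg hi]
    · intro j
      have h3 : ∑ i ∈ s, (if h : i ∈ s then qs ⟨i, h⟩ else 0) • y i = b := by
        rw [← Finset.sum_coe_sort s (fun i => (if h : i ∈ s then qs ⟨i, h⟩ else 0) • y i)]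
        rw [← hbrep]
        exact Finset.sum_congr rfl fun i _ => by rw [dif_pos i.2]
      have h4 := congrFun h3 j
      rw [Finset.sum_apply] at h4
      simp only [Pi.smul_apply, smul_eq_mul] at h4
      exact h4.symm
  · -- dependent case
    have hQnot : ¬ LinearIndependent ℚ (fun i : {x // x ∈ s} => y i.1) :=
      fun hQ => hind (cast_indep hQ)
    rw [Fintype.not_linearIndependent_iff] at hQnot
    obtain ⟨c, hc0, i₀, hi₀⟩ := hQnot
    obtain ⟨d, hd0, i₁, hi₁⟩ :
        ∃ d : {x // x ∈ s} → ℚ, ∑ i, d i • y i.1 = 0 ∧ ∃ i, 0 < d i := by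
      by_cases hp : ∃ i, 0 < c i
      · exact ⟨c, hc0, hp⟩
      · push_neg at hp
        refine ⟨-c, ?_, ⟨i₀, ?_⟩⟩
        · simp only [Pi.neg_apply, neg_smul]
          rw [Finset.sum_neg_distrib, hc0, neg_zero]
        · simp only [Pi.neg_apply]
          exact neg_pos.2 (lt_of_le_of_ne (hp i₀) hi₀)
    set D : Fin t → ℚ := fun i => if h : i ∈ s then d ⟨i, h⟩ else 0 with hD
    set P : Finset (Fin t) := s.filter (fun i => 0 < D i) with hP
    have hPne : P.Nonempty := by
      refine ⟨i₁.1, Finset.mem_filter.2 ⟨i₁.2, ?_⟩⟩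
      rw [hD]
      simpa [dif_pos i₁.2] using hi₁
    obtain ⟨p, hpP, hpmin⟩ := P.exists_min_image (fun i => r i / (D i : ℝ)) hPne
    have hps : p ∈ s := (Finset.mem_filter.1 hpP).1
    have hDp : 0 < D p := (Finset.mem_filter.1 hpP).2
    have hDpR : (0:ℝ) < (D p : ℝ) := by exact_mod_cast hDp
    set μ : ℝ := r p / (D p : ℝ) with hμ
    have hμ0 : 0 ≤ μ := div_nonneg (hr p) hDpR.le
    set r' : Fin t → ℝ := fun i => r i - μ * (D i : ℝ) with hr'
    have hr'0 : ∀ i, 0 ≤ r' i := by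
      intro i
      by_cases hDi : 0 < D i
      · have his : i ∈ s := by
          by_contra h'
          rw [hD] at hDi
          simp [dif_neg h'] at hDi
        have hiP : i ∈ P := Finset.mem_filter.2 ⟨his, hDi⟩
        have hmin := hpmin i hiP
        have hDiR : (0:ℝ) < (D i : ℝ) := by exact_mod_cast hDi
        have : μ * (D i : ℝ) ≤ r i := by
          rw [← le_div_iff₀ hDiR]
          exact hmin
        simp only [hr']
        linarith
      · push_neg at hDi
        have hDiR : ((D i : ℚ) : ℝ) ≤ 0 := by exact_mod_cast hDi
        have : μ * (D i : ℝ) ≤ 0 := mul_nonpos_of_nonneg_of_nonpos hμ0 hDiR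
        simp only [hr']
        linarith [hr i]
    have hr'p : r' p = 0 := by
      simp only [hr', hμ]
      field_simp
      ring
    have hDrel : ∀ j, ∑ i ∈ s, (D i : ℝ) * (y i j : ℝ) = 0 := by
      intro j
      have h1 := congrFun hd0 j
      rw [Finset.sum_apply] at h1
      simp only [Pi.smul_apply, smul_eq_mul, Pi.zero_apply] at h1
      have h2 : ∑ i ∈ s, D i * y i j = 0 := by
        rw [← Finset.sum_coe_sort s (fun i => D i * y i j)]
        rw [← h1]
        refine Finset.sum_congr rfl fun i _ => ?_
        simp only [hD, dif_pos i.2]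
      exact_mod_cast h2
    have hb' : ∀ j, (b j : ℝ) = ∑ i ∈ s.erase p, r' i * (y i j : ℝ) := by
      intro j
      have h1 : r' p * (y p j : ℝ) + ∑ i ∈ s.erase p, r' i * (y i j : ℝ)
          = ∑ i ∈ s, r' i * (y i j : ℝ) :=
        Finset.add_sum_erase s (fun i => r' i * (y i j : ℝ)) hps
      have h2 : ∑ i ∈ s, r' i * (y i j : ℝ)
          = ∑ i ∈ s, r i * (y i j : ℝ) - μ * ∑ i ∈ s, (D i : ℝ) * (y i j : ℝ) := by
        rw [Finset.mul_sum, ← Finset.sum_sub_distrib]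
        refine Finset.sum_congr rfl fun i _ => ?_
        simp only [hr']
        ring
      rw [hr'p, zero_mul, zero_add] at h1
      rw [h1, h2, hDrel j, ← hb j]
      ring
    obtain ⟨q, hq0, hqsupp, hqsum⟩ := ih (s.erase p) (Finset.erase_ssubset hps) b r' hr'0 hb'
    refine ⟨q, hq0, fun i hi => hqsupp i (fun h' => hi (Finset.mem_of_mem_erase h')), ?_⟩
    intro j
    rw [← Finset.add_sum_erase s (fun i => q i * y i j) hps,
      hqsupp p (Finset.notMem_erase p s), zero_mul, zero_add]
    exact hqsum j

/-- If `Λ` is an additive submonoid of `ℚⁿ` such that the cone `ℝ_{≥0}Λ` is a group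
(closed under negation), then `Λ` itself is a group (closed under negation). -/
theorem statement2 (n : ℕ) (hn : 0 < n) (Λ : AddSubmonoid (Fin n → ℚ))
    (h : ∀ x ∈ nonnegRealCone Λ, -x ∈ nonnegRealCone Λ) :
    ∀ x ∈ Λ, -x ∈ Λ := by
  intro x hx
  have hxc : (fun j => (x j : ℝ)) ∈ nonnegRealCone Λ := by
    refine ⟨1, fun _ => 1, fun _ => x, fun i => zero_le_one, fun i => hx, ?_⟩
    rw [Fin.sum_univ_one]
    funext j
    rw [one_mul]
  obtain ⟨t, r, y, hr, hyΛ, hsum⟩ := h _ hxc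
  have hb : ∀ j, (((-x) j : ℚ) : ℝ) = ∑ i ∈ Finset.univ, r i * (y i j : ℝ) := by
    intro j
    have h1 := congrFun hsum j
    rw [Finset.sum_apply] at h1
    simp only [Pi.neg_apply] at h1 ⊢
    push_cast
    exact h1
  obtain ⟨q, hq0, -, hqsum⟩ := ratify y Finset.univ (-x) r hr hb
  set N : ℕ := ∏ i, (q i).den with hN
  have hNpos : 0 < N := Finset.prod_pos (fun i _ => (q i).pos)
  have hk : ∀ i, ∃ k : ℕ, (k : ℚ) = q i * N := by
    intro i
    have hdvd : (q i).den ∣ N := Finset.dvd_prod_of_mem _ (Finset.mem_univ i)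
    obtain ⟨c, hc⟩ := hdvd
    have hz : (((q i).num * c : ℤ) : ℚ) = q i * N := by
      push_cast [hc]
      rw [← mul_assoc, Rat.mul_den_eq_num]
    have hznn : (0 : ℤ) ≤ (q i).num * c := by
      have h2 : (0:ℚ) ≤ (((q i).num * c : ℤ) : ℚ) := by
        rw [hz]
        exact mul_nonneg (hq0 i) (by positivity)
      exact_mod_cast h2
    refine ⟨((q i).num * c).toNat, ?_⟩
    rw [← hz]
    have h3 : ((((q i).num * c).toNat : ℤ) : ℚ) = (((q i).num * c : ℤ) : ℚ) := by
      rw [Int.toNat_of_nonneg hznn]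
    exact_mod_cast h3
  choose k hkk using hk
  have hz : (N • (-x)) ∈ Λ := by
    have heq : N • (-x) = ∑ i, k i • y i := by
      funext j
      rw [Finset.sum_apply]
      simp only [Pi.smul_apply, smul_eq_mul, nsmul_eq_mul]
      rw [hqsum j, Finset.mul_sum]
      refine Finset.sum_congr rfl fun i _ => ?_
      rw [hkk i]
      ring
    rw [heq]
    exact AddSubmonoid.sum_mem Λ (fun i _ => nsmul_mem (hyΛ i) (k i))
  have hN1 : N - 1 + 1 = N := Nat.succ_pred_eq_of_pos hNpos
  have hfinal : -x = N • (-x) + (N - 1) • x := by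
    have h5 : N • (-x) = -((N - 1) • x + x) := by
      rw [smul_neg]
      congr 1
      conv_lhs => rw [← hN1]
      rw [succ_nsmul]
    rw [h5]
    abel
  rw [hfinal]
  exact Λ.add_mem hz (nsmul_mem hx _)
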